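/- If for every prime p ≥ 3 the previous prime p' satisfies p - p' < 2√p, then for every integer m ≥ 2 the interval ((m-1)², m²) contains a prime (Legendre's conjecture, conditionally). -/
import Mathlib


def PrevPrime (p p' : ℕ) : Prop :=
  p'.Prime ∧ p' < p ∧ ∀ r : ℕ, r.Prime → r < p → r ≤ p'

theorem stmt8
    (h : ∀ p p' : ℕ, p.Prime → 3 ≤ p → PrevPrime p p' → (p : ℝ) - p' < 2 * Real.sqrt p) :
    ∀ m : ℕ, 2 ≤ m → ∃ r : ℕ, r.Prime ∧ (m - 1) ^ 2 < r ∧ r < m ^ 2 := by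
  classical
  intro m hm
  by_contra hcon
  push_neg at hcon
  obtain ⟨q, hq_ge, hq_prime⟩ := Nat.exists_infinite_primes ((m - 1) ^ 2 + 1)
  have hex : ∃ p, p.Prime ∧ (m - 1) ^ 2 < p := ⟨q, hq_prime, by omega⟩
  set p := Nat.find hex with hp_def
  obtain ⟨hp_prime, hp_gt⟩ := Nat.find_spec hex
  have hp_min : ∀ r, r < p → ¬(r.Prime ∧ (m - 1) ^ 2 < r) := fun r hr => Nat.find_min hex hr
  have hp_ge : m ^ 2 ≤ p := hcon p hp_prime hp_gt
  have hm2 : 4 ≤ m ^ 2 := by nlinarith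
  have h2 : 2 < p := by omega
  have hSne : ((Finset.range p).filter Nat.Prime).Nonempty :=
    ⟨2, by simp [Finset.mem_filter, Finset.mem_range, Nat.prime_two]; omega⟩
  set p' := ((Finset.range p).filter Nat.Prime).max' hSne with hp'
  have hp'_mem : p' ∈ (Finset.range p).filter Nat.Prime := Finset.max'_mem _ _
  rw [Finset.mem_filter, Finset.mem_range] at hp'_mem
  have hprev : PrevPrime p p' := by
    refine ⟨hp'_mem.2, hp'_mem.1, fun r hr hrp => Finset.le_max' _ r ?_⟩
    rw [Finset.mem_filter, Finset.mem_range]; exact ⟨hrp, hr⟩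
  have hgap := h p p' hp_prime (by omega) hprev
  have hnotprime_sq : ¬ ((m - 1) ^ 2).Prime := by
    intro hsq
    have hd : (m - 1) ∣ (m - 1) ^ 2 := dvd_pow_self _ two_ne_zero
    have h2le := hsq.two_le
    rcases hsq.eq_one_or_self_of_dvd _ hd with h1 | h1 <;> nlinarith
  have hp'_lt : p' < (m - 1) ^ 2 := by
    rcases lt_trichotomy p' ((m - 1) ^ 2) with h1 | h1 | h1
    · exact h1
    · exact absurd (h1 ▸ hprev.1) hnotprime_sq
    · exact absurd ⟨hprev.1, h1⟩ (hp_min p' hprev.2.1)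
  -- pass to reals
  have hA : (p' : ℝ) + 1 ≤ ((m : ℝ) - 1) ^ 2 := by
    have : (p' : ℕ) + 1 ≤ (m - 1) ^ 2 := hp'_lt
    have hcast : (((m - 1 : ℕ) : ℝ)) = (m : ℝ) - 1 := by
      push_cast [Nat.cast_sub (by omega : 1 ≤ m)]; ring
    calc (p' : ℝ) + 1 ≤ (((m - 1) ^ 2 : ℕ) : ℝ) := by exact_mod_cast this
      _ = ((m : ℝ) - 1) ^ 2 := by push_cast [hcast]; ring
  have hB : ((m : ℝ)) ^ 2 ≤ (p : ℝ) := by exact_mod_cast hp_ge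
  set s := Real.sqrt p with hs
  have hs0 : 0 ≤ s := Real.sqrt_nonneg _
  have hs2 : s ^ 2 = (p : ℝ) := Real.sq_sqrt (by positivity)
  have hmr : (2 : ℝ) ≤ (m : ℝ) := by exact_mod_cast hm
  have hms : (m : ℝ) ≤ s := by
    nlinarith [sq_nonneg (s - (m : ℝ)), sq_nonneg (s + (m : ℝ))]
  nlinarith [mul_nonneg (sub_nonneg.mpr hms) (by nlinarith : (0:ℝ) ≤ s + (m : ℝ) - 2)]
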